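/- For R(K;p,q) = P·R̂(K;p,q) where P is the 4×4 permutation matrix swapping the middle two basis vectors, one has (21)R(K;p,q) = (R(K';p,q))⁻¹ where K' = K·(K(1+q/p) − 1)⁻¹ and (21)R denotes conjugation of R by P (i.e., the matrix of R with tensor factors flipped), provided K(1+q/p) − 1 is invertible. -/

import Mathlib

open Matrix Kronecker

noncomputable section

/-- Row-major identification of `Fin 2 × Fin 2` with `Fin 4`. -/
def e22 : Fin 2 × Fin 2 ≃ Fin 4 := finProdFinEquiv

/-- View a 4×4 matrix as acting on `V ⊗ V` with `V` 2-dimensional. -/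
def toTensor {F : Type*} (M : Matrix (Fin 4) (Fin 4) F) :
    Matrix (Fin 2 × Fin 2) (Fin 2 × Fin 2) F :=
  Matrix.reindex e22.symm e22.symm M

/-- `M₁₂ = M ⊗ I₂` acting on `V ⊗ V ⊗ V`. -/
def m12 {F : Type*} [CommRing F] (M : Matrix (Fin 4) (Fin 4) F) :
    Matrix (Fin 2 × Fin 2 × Fin 2) (Fin 2 × Fin 2 × Fin 2) F :=
  Matrix.reindex (Equiv.prodAssoc _ _ _) (Equiv.prodAssoc _ _ _)
    (toTensor M ⊗ₖ (1 : Matrix (Fin 2) (Fin 2) F))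

/-- `M₂₃ = I₂ ⊗ M` acting on `V ⊗ V ⊗ V`. -/
def m23 {F : Type*} [CommRing F] (M : Matrix (Fin 4) (Fin 4) F) :
    Matrix (Fin 2 × Fin 2 × Fin 2) (Fin 2 × Fin 2 × Fin 2) F :=
  (1 : Matrix (Fin 2) (Fin 2) F) ⊗ₖ toTensor M

/-- The matrix `R̂(K;p,q)` of the standard biparametric deformation. -/
def Rpq {F : Type*} [Field F] (K p q : F) : Matrix (Fin 4) (Fin 4) F :=
  !![1, 0, 0, 0;
     0, 1 - K, K / p, 0;
     0, K * q, 1 - K * q / p, 0;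
     0, 0, 0, 1]

/-- The 4×4 flip (permutation) matrix swapping the middle two basis vectors. -/
def Pflip {F : Type*} [Field F] : Matrix (Fin 4) (Fin 4) F :=
  !![1, 0, 0, 0;
     0, 0, 1, 0;
     0, 1, 0, 0;
     0, 0, 0, 1]

set_option maxHeartbeats 1000000 in
lemma PP {F : Type*} [Field F] : (Pflip : Matrix (Fin 4) (Fin 4) F) * Pflip = 1 := by
  ext i j
  fin_cases i <;> fin_cases j <;>
    simp [Pflip, Matrix.mul_apply, Fin.sum_univ_four, Matrix.one_apply,
      Matrix.vecHead, Matrix.vecTail, Fin.ext_iff] <;> rfl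

set_option maxHeartbeats 2000000 in
lemma RR {F : Type*} [Field F] (K p q : F) (hp : p ≠ 0)
    (hK : K * (1 + q / p) - 1 ≠ 0) :
    Rpq K p q * Rpq (K / (K * (1 + q / p) - 1)) p q = 1 := by
  have hd : K * p + K * q - p ≠ 0 := by
    intro h; apply hK
    have : K * (1 + q / p) - 1 = (K * p + K * q - p) / p := by field_simp
    rw [this, h, zero_div]
  have h1 : K * p + (K * q - p) ≠ 0 := by rw [← add_sub_assoc]; exact hd
  have h2 : K * p * q + (K * p ^ 2 - p ^ 2) ≠ 0 := by
    intro h; apply hd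
    apply mul_left_cancel₀ hp
    rw [mul_zero]; linear_combination h
  have h3 : K * q + (K * p - p) ≠ 0 := by intro h; apply hd; linear_combination h
  have h4 : K * q * p + (K * p ^ 2 - p ^ 2) ≠ 0 := by intro h; apply h2; linear_combination h
  ext i j
  fin_cases i <;> fin_cases j <;>
    simp [Rpq, Matrix.mul_apply, Fin.sum_univ_four, Matrix.one_apply,
      Matrix.vecHead, Matrix.vecTail, Fin.ext_iff] <;>
  first
  | rfl
  | (rw [show K * (1 + q / p) - 1 = (K * p + K * q - p) / p from by field_simp]
     field_simp
     first
     | linear_combination K * mul_inv_cancel₀ hd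
     | linear_combination (-K) * mul_inv_cancel₀ hd
     | linear_combination (-(K * q)) * mul_inv_cancel₀
         (show K * q + K * p - p ≠ 0 by intro h; apply hd; linear_combination h)
     | linear_combination (K * q) * mul_inv_cancel₀
         (show K * q + K * p - p ≠ 0 by intro h; apply hd; linear_combination h))

theorem stmt8 {F : Type*} [Field F] (K p q : F) (hp : p ≠ 0)
    (hK : K * (1 + q / p) - 1 ≠ 0) :
    Pflip * (Pflip * Rpq K p q) * Pflip =
      (Pflip * Rpq (K / (K * (1 + q / p) - 1)) p q)⁻¹ := by
  symm
  apply Matrix.inv_eq_left_inv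
  calc Pflip * (Pflip * Rpq K p q) * Pflip * (Pflip * Rpq (K / (K * (1 + q / p) - 1)) p q)
      = (Pflip * Pflip) * Rpq K p q * (Pflip * Pflip) * Rpq (K / (K * (1 + q / p) - 1)) p q := by
        noncomm_ring
    _ = Rpq K p q * Rpq (K / (K * (1 + q / p) - 1)) p q := by rw [PP]; simp
    _ = 1 := RR K p q hp hK
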